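/- Let X₁ and X₂ be topological spaces and let f be a contact-preserving Boolean isomorphism between their regular closed algebras. If there is a regular closed subset A of X₁ whose interior is a nonempty connected subspace of X₁ while the interior of f(A) is not a preconnected subspace of X₂, then it is not the case that both X₁ and X₂ have at most four points; that is, at least one of the two spaces has at least five points (and by the preceding result the other has at least four). -/
import Mathlib


/-- A set is regular closed if it equals the closure of its interior. -/
def RegClosed {X : Type} [TopologicalSpace X] (A : Set X) : Prop :=
  A = closure (interior A)

/-- A contact-preserving Boolean isomorphism between the regular closed algebras of
`X₁` and `X₂`: a bijection `f` from the regular closed subsets of `X₁` onto those of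
`X₂` with `f ∅ = ∅`, `f X₁ = X₂`, `f (A ∪ B) = f A ∪ f B`,
`f (closure (X₁ ∖ A)) = closure (X₂ ∖ f A)`, and `A ∩ B ≠ ∅ ↔ f A ∩ f B ≠ ∅`. -/
def ContactIso {X₁ X₂ : Type} [TopologicalSpace X₁] [TopologicalSpace X₂]
    (f : Set X₁ → Set X₂) : Prop :=
  Set.BijOn f {A : Set X₁ | RegClosed A} {B : Set X₂ | RegClosed B} ∧
  f ∅ = ∅ ∧
  f Set.univ = Set.univ ∧
  (∀ A B : Set X₁, RegClosed A → RegClosed B → f (A ∪ B) = f A ∪ f B) ∧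
  (∀ A : Set X₁, RegClosed A → f (closure Aᶜ) = closure (f A)ᶜ) ∧
  (∀ A B : Set X₁, RegClosed A → RegClosed B →
    ((A ∩ B).Nonempty ↔ (f A ∩ f B).Nonempty))

lemma st13_regClosed_closure {X : Type} [TopologicalSpace X] {O : Set X} (hO : IsOpen O) :
    RegClosed (closure O) := by
  apply subset_antisymm
  · exact closure_mono (interior_maximal subset_closure hO)
  · calc closure (interior (closure O)) ⊆ closure (closure O) := closure_mono interior_subset
      _ = closure O := closure_closure

lemma st13_isClosed {X : Type} [TopologicalSpace X] {A : Set X} (h : RegClosed A) :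
    IsClosed A := by rw [h]; exact isClosed_closure

lemma st13_union {X : Type} [TopologicalSpace X] {A B : Set X} (hA : RegClosed A)
    (hB : RegClosed B) : RegClosed (A ∪ B) := by
  apply subset_antisymm
  · apply Set.union_subset
    · exact hA.le.trans (closure_mono (interior_mono Set.subset_union_left))
    · exact hB.le.trans (closure_mono (interior_mono Set.subset_union_right))
  · exact (closure_mono interior_subset).trans
      (((st13_isClosed hA).union (st13_isClosed hB)).closure_eq.le)

lemma st13_regClosed_empty {X : Type} [TopologicalSpace X] : RegClosed (∅ : Set X) := by
  unfold RegClosed; simp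

lemma st13_meet_eq {X : Type} [TopologicalSpace X] (C D : Set X) :
    closure ((closure Cᶜ ∪ closure Dᶜ)ᶜ) = closure (interior C ∩ interior D) := by
  have h1 : closure Cᶜ ∪ closure Dᶜ = (interior (C ∩ D))ᶜ := by
    calc closure Cᶜ ∪ closure Dᶜ = closure (Cᶜ ∪ Dᶜ) := (closure_union).symm
      _ = closure ((C ∩ D)ᶜ) := by rw [Set.compl_inter]
      _ = (interior (C ∩ D))ᶜ := closure_compl
  rw [h1, compl_compl, interior_inter]

lemma st13_card_four {α : Type} [DecidableEq α] {w x y z : α} (h1 : w ≠ x) (h2 : w ≠ y)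
    (h3 : w ≠ z) (h4 : x ≠ y) (h5 : x ≠ z) (h6 : y ≠ z) :
    ({w, x, y, z} : Finset α).card = 4 := by
  rw [Finset.card_insert_of_notMem (by simp [h1, h2, h3]),
    Finset.card_insert_of_notMem (by simp [h4, h5]),
    Finset.card_insert_of_notMem (by simp [h6]), Finset.card_singleton]

/-- If f is a contact-preserving Boolean isomorphism between the
regular closed algebras of X₁ and X₂ and some regular closed A ⊆ X₁ has a nonempty
connected interior while the interior of f(A) is not preconnected, then it is not
the case that both X₁ and X₂ have at most four points; that is, at least one of the
two spaces has at least five points (and the other has at least four). -/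
theorem stmt13 {X₁ X₂ : Type} [TopologicalSpace X₁] [TopologicalSpace X₂]
    (f : Set X₁ → Set X₂) (hf : ContactIso f)
    (A : Set X₁) (hA : RegClosed A)
    (hAc : IsConnected (interior A))
    (hfA : ¬ IsPreconnected (interior (f A))) :
    ¬ ((∀ s : Finset X₁, s.card ≤ 4) ∧ (∀ s : Finset X₂, s.card ≤ 4)) ∧
    ((∃ s : Finset X₁, 5 ≤ s.card) ∨ (∃ s : Finset X₂, 5 ≤ s.card)) ∧
    (∃ s : Finset X₁, 4 ≤ s.card) ∧ (∃ s : Finset X₂, 4 ≤ s.card) := by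
  classical
  obtain ⟨hbij, hempty, huniv, hunion, hcompl, hcontact⟩ := hf
  obtain ⟨hmap, hinj, hsurj⟩ := hbij
  unfold IsPreconnected at hfA
  push_neg at hfA
  obtain ⟨u', v', hou, hov, hcov, hne1, hne2, hdis⟩ := hfA
  set U : Set X₂ := interior (f A) ∩ u' with hUdef
  set V : Set X₂ := interior (f A) ∩ v' with hVdef
  have hUopen : IsOpen U := isOpen_interior.inter hou
  have hVopen : IsOpen V := isOpen_interior.inter hov
  have hUV : U ∩ V = ∅ := by
    apply Set.eq_empty_iff_forall_notMem.mpr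
    rintro x ⟨⟨hx1, hx2⟩, ⟨_, hx3⟩⟩
    exact Set.eq_empty_iff_forall_notMem.mp hdis x ⟨hx1, hx2, hx3⟩
  have hUVun : U ∪ V = interior (f A) := by
    apply subset_antisymm
    · exact Set.union_subset Set.inter_subset_left Set.inter_subset_left
    · intro x hx
      rcases hcov hx with h | h
      · exact Or.inl ⟨hx, h⟩
      · exact Or.inr ⟨hx, h⟩
  obtain ⟨u, hu⟩ := hne1
  obtain ⟨v, hv⟩ := hne2
  have hBrc : RegClosed (f A) := hmap hA
  have hB1rc : RegClosed (closure U) := st13_regClosed_closure hUopen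
  have hB2rc : RegClosed (closure V) := st13_regClosed_closure hVopen
  obtain ⟨A₁, hA₁rc, hfA₁⟩ := hsurj hB1rc
  obtain ⟨A₂, hA₂rc, hfA₂⟩ := hsurj hB2rc
  have hA₁rc' : RegClosed A₁ := hA₁rc
  have hA₂rc' : RegClosed A₂ := hA₂rc
  have hBB : closure U ∪ closure V = f A := by
    rw [← closure_union, hUVun]; exact hBrc.symm
  have hA12 : A₁ ∪ A₂ = A := by
    apply hinj (st13_union hA₁rc' hA₂rc') hA
    rw [hunion A₁ A₂ hA₁rc' hA₂rc', hfA₁, hfA₂, hBB]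
  have hA₁sub : A₁ ⊆ A := by rw [← hA12]; exact Set.subset_union_left
  have hA₂sub : A₂ ⊆ A := by rw [← hA12]; exact Set.subset_union_right
  have hA₁ne : A₁.Nonempty := by
    have h := (hcontact A₁ A₁ hA₁rc' hA₁rc').mpr
      (by rw [hfA₁, Set.inter_self]; exact ⟨u, subset_closure hu⟩)
    rw [Set.inter_self] at h; exact h
  have hA₂ne : A₂.Nonempty := by
    have h := (hcontact A₂ A₂ hA₂rc' hA₂rc').mpr
      (by rw [hfA₂, Set.inter_self]; exact ⟨v, subset_closure hv⟩)
    rw [Set.inter_self] at h; exact h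
  have hintA₁ne : (interior A₁).Nonempty := by
    rw [Set.nonempty_iff_ne_empty]
    intro h
    rw [hA₁rc', h, closure_empty] at hA₁ne
    exact Set.not_nonempty_empty hA₁ne
  have hintA₂ne : (interior A₂).Nonempty := by
    rw [Set.nonempty_iff_ne_empty]
    intro h
    rw [hA₂rc', h, closure_empty] at hA₂ne
    exact Set.not_nonempty_empty hA₂ne
  obtain ⟨a₁, ha₁⟩ := hintA₁ne
  obtain ⟨a₂, ha₂⟩ := hintA₂ne
  have hApre : IsPreconnected A := by
    rw [hA]; exact hAc.isPreconnected.closure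
  have hA12ne : (A₁ ∩ A₂).Nonempty := by
    rw [Set.nonempty_iff_ne_empty]
    intro hdisj
    have hde := Set.eq_empty_iff_forall_notMem.mp hdisj
    have hcover : A ⊆ A₂ᶜ ∪ A₁ᶜ := by
      intro x hx
      rw [← hA12] at hx
      rcases hx with h | h
      · exact Or.inl fun h2 => hde x ⟨h, h2⟩
      · exact Or.inr fun h1 => hde x ⟨h1, h⟩
    obtain ⟨x₁, hx₁⟩ := hA₁ne
    obtain ⟨x₂, hx₂⟩ := hA₂ne
    have hpc := hApre A₂ᶜ A₁ᶜ (st13_isClosed hA₂rc').isOpen_compl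
      (st13_isClosed hA₁rc').isOpen_compl hcover
      ⟨x₁, hA₁sub hx₁, fun h2 => hde x₁ ⟨hx₁, h2⟩⟩
      ⟨x₂, hA₂sub hx₂, fun h1 => hde x₂ ⟨h1, hx₂⟩⟩
    obtain ⟨x, hxA, hx2c, hx1c⟩ := hpc
    rw [← hA12] at hxA
    rcases hxA with h | h
    · exact hx1c h
    · exact hx2c h
  obtain ⟨q, hqA₁, hqA₂⟩ := hA12ne
  have hB12ne : (closure U ∩ closure V).Nonempty := by
    have h := (hcontact A₁ A₂ hA₁rc' hA₂rc').mp ⟨q, hqA₁, hqA₂⟩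
    rwa [hfA₁, hfA₂] at h
  obtain ⟨p, hp₁, hp₂⟩ := hB12ne
  have hpU : p ∉ U := by
    intro hpU
    obtain ⟨y, hyU, hyV⟩ := mem_closure_iff.mp hp₂ U hUopen hpU
    exact Set.eq_empty_iff_forall_notMem.mp hUV y ⟨hyU, hyV⟩
  have hpV : p ∉ V := by
    intro hpV
    obtain ⟨y, hyV, hyU⟩ := mem_closure_iff.mp hp₁ V hVopen hpV
    exact Set.eq_empty_iff_forall_notMem.mp hUV y ⟨hyU, hyV⟩
  have hpint : p ∉ interior (f A) := by
    rw [← hUVun]; rintro (h | h)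
    exacts [hpU h, hpV h]
  have hintB : interior (closure U) ∩ interior (closure V) = ∅ := by
    apply Set.eq_empty_iff_forall_notMem.mpr
    rintro x ⟨hx1, hx2⟩
    have hWopen : IsOpen (interior (closure U) ∩ interior (closure V)) :=
      isOpen_interior.inter isOpen_interior
    obtain ⟨y, ⟨hy1, hy2⟩, hyU⟩ :=
      mem_closure_iff.mp (interior_subset hx1) _ hWopen ⟨hx1, hx2⟩
    obtain ⟨z, hzU, hzV⟩ := mem_closure_iff.mp (interior_subset hy2) U hUopen hyU
    exact Set.eq_empty_iff_forall_notMem.mp hUV z ⟨hzU, hzV⟩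
  have hmeetB : closure ((closure (closure U)ᶜ ∪ closure (closure V)ᶜ)ᶜ) = ∅ := by
    rw [st13_meet_eq, hintB, closure_empty]
  have hrc1 : RegClosed (closure A₁ᶜ) :=
    st13_regClosed_closure (st13_isClosed hA₁rc').isOpen_compl
  have hrc2 : RegClosed (closure A₂ᶜ) :=
    st13_regClosed_closure (st13_isClosed hA₂rc').isOpen_compl
  have hDrc : RegClosed (closure A₁ᶜ ∪ closure A₂ᶜ) := st13_union hrc1 hrc2
  have hfm : f (closure ((closure A₁ᶜ ∪ closure A₂ᶜ)ᶜ)) = ∅ := by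
    rw [hcompl _ hDrc, hunion _ _ hrc1 hrc2, hcompl _ hA₁rc', hcompl _ hA₂rc', hfA₁, hfA₂]
    exact hmeetB
  have hmeetA : closure ((closure A₁ᶜ ∪ closure A₂ᶜ)ᶜ) = ∅ := by
    have hMrc : RegClosed (closure ((closure A₁ᶜ ∪ closure A₂ᶜ)ᶜ)) :=
      st13_regClosed_closure (st13_isClosed hDrc).isOpen_compl
    exact hinj hMrc st13_regClosed_empty (by rw [hfm, hempty])
  have hintA12 : interior A₁ ∩ interior A₂ = ∅ := by
    have h2 : closure (interior A₁ ∩ interior A₂) = ∅ := by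
      rw [← st13_meet_eq]; exact hmeetA
    exact Set.subset_eq_empty subset_closure h2
  have hqint₁ : q ∉ interior A₁ := by
    intro h
    have hq2 : q ∈ closure (interior A₂) := by rw [← hA₂rc']; exact hqA₂
    obtain ⟨y, hy1, hy2⟩ := mem_closure_iff.mp hq2 _ isOpen_interior h
    exact Set.eq_empty_iff_forall_notMem.mp hintA12 y ⟨hy1, hy2⟩
  have hqint₂ : q ∉ interior A₂ := by
    intro h
    have hq2 : q ∈ closure (interior A₁) := by rw [← hA₁rc']; exact hqA₁
    obtain ⟨y, hy1, hy2⟩ := mem_closure_iff.mp hq2 _ isOpen_interior h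
    exact Set.eq_empty_iff_forall_notMem.mp hintA12 y ⟨hy2, hy1⟩
  have hBne : f A ≠ Set.univ := by
    intro h
    apply hpint
    rw [h, interior_univ]
    trivial
  have hAne : A ≠ Set.univ := fun h => hBne (by rw [← huniv, h])
  obtain ⟨r, hr⟩ := Set.nonempty_compl.mpr hAne
  have ha12 : a₁ ≠ a₂ := by
    rintro rfl; exact Set.eq_empty_iff_forall_notMem.mp hintA12 a₁ ⟨ha₁, ha₂⟩
  have hqa1 : q ≠ a₁ := by rintro rfl; exact hqint₁ ha₁
  have hqa2 : q ≠ a₂ := by rintro rfl; exact hqint₂ ha₂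
  have ha₁A : a₁ ∈ A := hA₁sub (interior_subset ha₁)
  have ha₂A : a₂ ∈ A := hA₂sub (interior_subset ha₂)
  have hqAmem : q ∈ A := hA₁sub hqA₁
  have hra1 : r ≠ a₁ := by rintro rfl; exact hr ha₁A
  have hra2 : r ≠ a₂ := by rintro rfl; exact hr ha₂A
  have hrq : r ≠ q := by rintro rfl; exact hr hqAmem
  have huvne : u ≠ v := by
    rintro rfl; exact Set.eq_empty_iff_forall_notMem.mp hUV u ⟨hu, hv⟩
  have hpu : p ≠ u := by rintro rfl; exact hpU hu
  have hpv : p ≠ v := by rintro rfl; exact hpV hv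
  have hUsub : U ⊆ interior (f A) := by rw [← hUVun]; exact Set.subset_union_left
  have huB : u ∈ f A := interior_subset (hUsub hu)
  have hvB : v ∈ f A := interior_subset ((by rw [← hUVun]; exact Set.subset_union_right : V ⊆ interior (f A)) hv)
  have hpB : p ∈ f A := by
    rw [hBrc]
    exact closure_mono hUsub hp₁
  obtain ⟨w, hw⟩ := Set.nonempty_compl.mpr hBne
  have hwu : w ≠ u := by rintro rfl; exact hw huB
  have hwv : w ≠ v := by rintro rfl; exact hw hvB
  have hwp : w ≠ p := by rintro rfl; exact hw hpB
  have hcard1 : ({a₁, a₂, q, r} : Finset X₁).card = 4 :=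
    st13_card_four ha12 hqa1.symm hra1.symm hqa2.symm hra2.symm hrq.symm
  have hcard2 : ({u, v, p, w} : Finset X₂).card = 4 :=
    st13_card_four huvne hpu.symm hwu.symm hpv.symm hwv.symm hwp.symm
  have key : ∃ s : Finset X₁, 5 ≤ s.card := by
    by_contra hkey
    push_neg at hkey
    have hall : ∀ x : X₁, x = a₁ ∨ x = a₂ ∨ x = q ∨ x = r := by
      intro x
      by_contra hx
      push_neg at hx
      obtain ⟨h1, h2, h3, h4⟩ := hx
      have hc : (insert x ({a₁, a₂, q, r} : Finset X₁)).card = 5 := by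
        rw [Finset.card_insert_of_notMem (by simp [h1, h2, h3, h4]), hcard1]
      have := hkey (insert x ({a₁, a₂, q, r} : Finset X₁))
      omega
    have hiA1 : interior A₁ = {a₁} := by
      apply subset_antisymm
      · intro x hx
        rcases hall x with rfl | rfl | rfl | rfl
        · exact rfl
        · exact absurd (Set.eq_empty_iff_forall_notMem.mp hintA12 x) (by simp [hx, ha₂])
        · exact absurd hx hqint₁
        · exact absurd (hA₁sub (interior_subset hx)) hr
      · exact Set.singleton_subset_iff.mpr ha₁
    have hiA2 : interior A₂ = {a₂} := by
      apply subset_antisymm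
      · intro x hx
        rcases hall x with rfl | rfl | rfl | rfl
        · exact absurd (Set.eq_empty_iff_forall_notMem.mp hintA12 x) (by simp [hx, ha₁])
        · exact rfl
        · exact absurd hx hqint₂
        · exact absurd (hA₂sub (interior_subset hx)) hr
      · exact Set.singleton_subset_iff.mpr ha₂
    have hqiA : q ∈ interior A := by
      by_contra hq'
      have hsub : interior A ⊆ interior A₁ ∪ interior A₂ := by
        intro x hx
        rcases hall x with rfl | rfl | rfl | rfl
        · exact Or.inl ha₁
        · exact Or.inr ha₂
        · exact absurd hx hq'
        · exact absurd (interior_subset hx) hr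
      have hne1' : (interior A ∩ interior A₁).Nonempty :=
        ⟨a₁, interior_mono hA₁sub ha₁, ha₁⟩
      have hne2' : (interior A ∩ interior A₂).Nonempty :=
        ⟨a₂, interior_mono hA₂sub ha₂, ha₂⟩
      obtain ⟨x, _, hx12⟩ := hAc.isPreconnected _ _ isOpen_interior isOpen_interior
        hsub hne1' hne2'
      exact Set.eq_empty_iff_forall_notMem.mp hintA12 x hx12
    have hAopen : interior A = A := by
      apply subset_antisymm interior_subset
      intro x hx
      rcases hall x with rfl | rfl | rfl | rfl
      · exact interior_mono hA₁sub ha₁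
      · exact interior_mono hA₂sub ha₂
      · exact hqiA
      · exact absurd hx hr
    have h19 : A₁ ∩ closure Aᶜ = ∅ := by
      rw [closure_compl, hAopen]
      apply Set.eq_empty_iff_forall_notMem.mpr
      rintro x ⟨hx1, hx2⟩
      exact hx2 (hA₁sub hx1)
    have hrcA : RegClosed (closure Aᶜ) :=
      st13_regClosed_closure (st13_isClosed hA).isOpen_compl
    have hconR : (f A₁ ∩ f (closure Aᶜ)).Nonempty := by
      rw [hfA₁, hcompl A hA, closure_compl]
      exact ⟨p, hp₁, hpint⟩
    have hcon := (hcontact A₁ (closure Aᶜ) hA₁rc' hrcA).mpr hconR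
    rw [h19] at hcon
    exact Set.not_nonempty_empty hcon
  refine ⟨?_, Or.inl key, ⟨{a₁, a₂, q, r}, hcard1.ge⟩, ⟨{u, v, p, w}, hcard2.ge⟩⟩
  rintro ⟨h1, _⟩
  obtain ⟨s, hs⟩ := key
  have := h1 s
  omega
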